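/- Let n ≥ 2 and let S_n(Sym_n) be the monoid presented by generators x_1,…,x_n and relations x_{σ(1)}x_{σ(2)}⋯x_{σ(n)} = x_1x_2⋯x_n for all σ ∈ Sym_n. Then for every m ≥ 1 and every i with 2 ≤ i ≤ n, the identity x_i·x_1^m·x_ε = x_1^m·x_ε·x_i holds in S_n(Sym_n), where x_ε = x_1x_2⋯x_n. -/

import Mathlib

/-- The word `x_{σ(1)} x_{σ(2)} ⋯ x_{σ(n)}` in the free monoid on `n` generators
(generator `x_j` is indexed by `j-1 : Fin n`). -/
def permWord {n : ℕ} (σ : Equiv.Perm (Fin n)) : FreeMonoid (Fin n) :=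
  FreeMonoid.ofList (List.ofFn fun i => σ i)

/-- The word `x_ε = x_1 x_2 ⋯ x_n`. -/
def epsWord (n : ℕ) : FreeMonoid (Fin n) :=
  FreeMonoid.ofList (List.ofFn fun i : Fin n => i)

/-- The defining relations `x_{σ(1)} ⋯ x_{σ(n)} = x_1 ⋯ x_n`, `σ ∈ Sym_n`. -/
def symRel (n : ℕ) : FreeMonoid (Fin n) → FreeMonoid (Fin n) → Prop :=
  fun a b => ∃ σ : Equiv.Perm (Fin n), a = permWord σ ∧ b = epsWord n

/-- The canonical projection from the free monoid onto `S_n(Sym_n)`. -/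
def proj (n : ℕ) : FreeMonoid (Fin n) →* PresentedMonoid (symRel n) :=
  PresentedMonoid.mk (symRel n)

/-- `u` contains a subword of the form `x_{σ(1)} ⋯ x_{σ(n)}` for some `σ ∈ Sym_n`. -/
def HasPermSubword {n : ℕ} (u : FreeMonoid (Fin n)) : Prop :=
  ∃ (σ : Equiv.Perm (Fin n)) (a b : FreeMonoid (Fin n)), u = a * permWord σ * b

/-- The word `x_1^{m_1} · x_ε · x_2^{m_2} ⋯ x_n^{m_n}` (0-indexed: `m i` is the
exponent of generator `i`). -/
def normalWord (n : ℕ) (h : 0 < n) (m : Fin n → ℕ) : FreeMonoid (Fin n) :=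
  FreeMonoid.ofList (List.replicate (m ⟨0, h⟩) ⟨0, h⟩) * epsWord n *
    FreeMonoid.ofList (((List.finRange n).drop 1).flatMap fun i => List.replicate (m i) i)

lemma proj_eq_of_perm {n : ℕ} (l : List (Fin n)) (hnd : l.Nodup) (hl : l.length = n) :
    proj n (FreeMonoid.ofList l) = proj n (epsWord n) := by
  have hinj : Function.Injective (fun i : Fin n => l.get (Fin.cast hl.symm i)) := by
    intro a b hab
    have := List.nodup_iff_injective_get.1 hnd hab
    simpa [Fin.ext_iff] using this
  have hbij := hinj.bijective_of_finite
  set σ : Equiv.Perm (Fin n) := Equiv.ofBijective _ hbij with hσ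
  have hw : permWord σ = FreeMonoid.ofList l := by
    unfold permWord
    congr 1
    apply List.ext_get (by simp [hl])
    intro k h1 h2
    simp [hσ, Equiv.ofBijective]
  have : symRel n (FreeMonoid.ofList l) (epsWord n) := ⟨σ, hw.symm, rfl⟩
  exact Quotient.sound (ConGen.Rel.of _ _ this)

lemma central {n : ℕ} (j : Fin n) :
    proj n (FreeMonoid.of j) * proj n (epsWord n) =
      proj n (epsWord n) * proj n (FreeMonoid.of j) := by
  set l := (List.finRange n).erase j with hl
  have hmem : j ∈ List.finRange n := List.mem_finRange j
  have hnd : l.Nodup := (List.nodup_finRange n).erase j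
  have hlen : l.length = n - 1 := by rw [hl, List.length_erase_of_mem hmem]; simp
  have hn : 0 < n := j.pos
  have hjl : j ∉ l := (List.nodup_finRange n).not_mem_erase
  have h1 : proj n (FreeMonoid.ofList (l ++ [j])) = proj n (epsWord n) := by
    apply proj_eq_of_perm
    · simp [List.nodup_append, hnd, hjl]
      intro a ha h; rw [h] at ha; exact hjl ha
    · simp only [List.length_append, List.length_cons, List.length_nil, hlen]; omega
  have h2 : proj n (FreeMonoid.ofList (j :: l)) = proj n (epsWord n) := by
    apply proj_eq_of_perm
    · simp [hnd, hjl]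
    · simp only [List.length_append, List.length_cons, List.length_nil, hlen]; omega
  calc proj n (FreeMonoid.of j) * proj n (epsWord n)
      = proj n (FreeMonoid.of j) * proj n (FreeMonoid.ofList (l ++ [j])) := by rw [h1]
    _ = proj n (FreeMonoid.ofList (j :: l)) * proj n (FreeMonoid.of j) := by
        rw [← map_mul, ← map_mul]
        rfl
    _ = proj n (epsWord n) * proj n (FreeMonoid.of j) := by rw [h2]

lemma base_comm {n : ℕ} (i z : Fin n) (hiz : i ≠ z) :
    proj n (FreeMonoid.of i) * proj n (FreeMonoid.of z) * proj n (epsWord n) =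
      proj n (epsWord n) * proj n (FreeMonoid.of z) * proj n (FreeMonoid.of i) := by
  set r := ((List.finRange n).erase z).erase i with hr
  have hnd : r.Nodup := ((List.nodup_finRange n).erase z).erase i
  have hzmem : z ∈ List.finRange n := List.mem_finRange z
  have himem : i ∈ (List.finRange n).erase z :=
    (List.mem_erase_of_ne hiz).2 (List.mem_finRange i)
  have hn : 2 ≤ n := by
    have h1 := List.length_pos_iff.2 (List.ne_nil_of_mem himem)
    have h2 : ((List.finRange n).erase z).length = n - 1 := by
      rw [List.length_erase_of_mem hzmem]; simp
    omega
  have hlen : r.length = n - 2 := by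
    rw [hr, List.length_erase_of_mem himem, List.length_erase_of_mem hzmem]
    simp
    omega
  have hir : i ∉ r := ((List.nodup_finRange n).erase z).not_mem_erase
  have hzr : z ∉ r := by
    intro h
    exact (List.nodup_finRange n).not_mem_erase (List.mem_of_mem_erase h)
  have h1 : proj n (FreeMonoid.ofList (r ++ [z, i])) = proj n (epsWord n) := by
    apply proj_eq_of_perm
    · simp [List.nodup_append, hnd, hzr, hir, Ne.symm hiz]
      intro a ha
      exact ⟨fun h => by rw [h] at ha; exact hzr ha, fun h => by rw [h] at ha; exact hir ha⟩
    · simp only [List.length_append, List.length_cons, List.length_nil, hlen]; omega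
  have h2 : proj n (FreeMonoid.ofList (i :: z :: r)) = proj n (epsWord n) := by
    apply proj_eq_of_perm
    · simp [hnd, hzr, hir, hiz, Ne.symm hiz]
    · simp only [List.length_append, List.length_cons, List.length_nil, hlen]; omega
  calc proj n (FreeMonoid.of i) * proj n (FreeMonoid.of z) * proj n (epsWord n)
      = proj n (FreeMonoid.of i) * proj n (FreeMonoid.of z) *
          proj n (FreeMonoid.ofList (r ++ [z, i])) := by rw [h1]
    _ = proj n (FreeMonoid.ofList (i :: z :: r)) * proj n (FreeMonoid.of z) *
          proj n (FreeMonoid.of i) := by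
        rw [← map_mul, ← map_mul, ← map_mul, ← map_mul]
        congr 1
        rw [← FreeMonoid.ofList_singleton, ← FreeMonoid.ofList_singleton,
          ← FreeMonoid.ofList_append, ← FreeMonoid.ofList_append,
          ← FreeMonoid.ofList_append, ← FreeMonoid.ofList_append]
        simp
    _ = _ := by rw [h2]

lemma key_comm {M : Type*} [Monoid M] (a b E : M) (h1 : a * E = E * a)
    (h2 : b * E = E * b) (h3 : b * a * E = E * a * b) :
    ∀ m : ℕ, 1 ≤ m → b * a ^ m * E = a ^ m * E * b := by
  intro m hm
  induction m with
  | zero => omega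
  | succ m ih =>
    rcases Nat.lt_or_ge 1 (m + 1) with h | h
    swap
    · obtain rfl : m = 0 := by omega
      rw [pow_one, h3, ← h1]
    have hm' : 1 ≤ m := by omega
    have ih' := ih hm'
    calc b * a ^ (m + 1) * E
        = b * a ^ m * (a * E) := by
          rw [pow_succ, ← mul_assoc, mul_assoc (b * a ^ m) a E]
      _ = b * a ^ m * E * a := by rw [h1, ← mul_assoc]
      _ = a ^ m * E * b * a := by rw [ih']
      _ = a ^ m * (E * (b * a)) := by rw [mul_assoc (a ^ m * E) b a, mul_assoc (a ^ m) E (b * a)]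
      _ = a ^ m * (b * a * E) := by
          rw [← mul_assoc E b a, ← h2, mul_assoc b E a, ← h1, ← mul_assoc b a E]
      _ = a ^ m * (E * (a * b)) := by
          rw [h3, mul_assoc E a b]
      _ = a ^ (m + 1) * E * b := by
          rw [← mul_assoc E a b, ← h1, mul_assoc a E b, pow_succ,
            ← mul_assoc (a ^ m) a (E * b), mul_assoc (a ^ m * a) E b]

/-- For every `m ≥ 1` and every generator `x_i` with `2 ≤ i ≤ n` (0-indexed: `i.val ≠ 0`),
`x_i · x_1^m · x_ε = x_1^m · x_ε · x_i` holds in `S_n(Sym_n)`. -/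
theorem xi_x1pow_eps_comm (n : ℕ) (hn : 2 ≤ n) (m : ℕ) (hm : 1 ≤ m)
    (i : Fin n) (hi : i.val ≠ 0) :
    proj n (FreeMonoid.of i) * proj n (FreeMonoid.of (⟨0, by omega⟩ : Fin n)) ^ m *
        proj n (epsWord n) =
      proj n (FreeMonoid.of (⟨0, by omega⟩ : Fin n)) ^ m * proj n (epsWord n) *
        proj n (FreeMonoid.of i) := by
  set z : Fin n := ⟨0, by omega⟩ with hz
  have hiz : i ≠ z := by simp [hz, Fin.ext_iff, hi]
  exact key_comm _ _ _ (central z) (central i) (base_comm i z hiz) m hm
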